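/- Let u and v be distinct vertices of the Cayley graph Cay(Sym(n),𝒯) generated by a set of transpositions 𝒯. If u and v have exactly 3 common neighbors, then there exist three points s, p, t of {1,…,n} forming a triangle in G(𝒯) (i.e., the transpositions (s t), (s p), (p t) all lie in 𝒯) such that the three common neighbors are u·(s t) = v·(s p), u·(s p) = v·(p t), and u·(p t) = v·(s t). -/
import Mathlib


/-- The transposition generating graph `G(𝒯)` of a set `T` of transpositions of `Sym(n)`:
vertices `{1,…,n}` (modeled as `Fin n`), with an edge `i j` iff the transposition
`(i j)` belongs to `T`. -/
def transGraph {n : ℕ} (T : Set (Equiv.Perm (Fin n))) : SimpleGraph (Fin n) :=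
  SimpleGraph.fromRel (fun i j => Equiv.swap i j ∈ T)

/-- The Cayley graph `Cay(Sym(n), T)`: vertices are permutations, and `g, h` are
adjacent iff `h = g * t` for some `t ∈ T`. -/
def cayley {n : ℕ} (T : Set (Equiv.Perm (Fin n))) : SimpleGraph (Equiv.Perm (Fin n)) :=
  SimpleGraph.fromRel (fun g h => ∃ t ∈ T, h = g * t)

/-- `G` is a `k`-tree: there is a construction ordering of the vertices in which the
first `k+1` vertices are mutually adjacent, and each later vertex is joined to exactly
`k` mutually adjacent earlier vertices. -/
def IsKTree (k : ℕ) {V : Type*} [Fintype V] (G : SimpleGraph V) : Prop :=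
  k + 1 ≤ Fintype.card V ∧
  ∃ e : Fin (Fintype.card V) ≃ V,
    (∀ i j : Fin (Fintype.card V), j < i → (i : ℕ) ≤ k → G.Adj (e i) (e j)) ∧
    ∀ i : Fin (Fintype.card V), k + 1 ≤ (i : ℕ) →
      {j : Fin (Fintype.card V) | j < i ∧ G.Adj (e i) (e j)}.ncard = k ∧
      {j : Fin (Fintype.card V) | j < i ∧ G.Adj (e i) (e j)}.Pairwise
        (fun j₁ j₂ => G.Adj (e j₁) (e j₂))

/-- `F` is an `R_k`-vertex-cut of `G`: `G - F` is disconnected and every vertex of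
`G - F` has at least `k` neighbors in `G - F`. -/
def IsRkCut {V : Type*} (G : SimpleGraph V) (k : ℕ) (F : Set V) : Prop :=
  ¬ (G.induce (Fᶜ : Set V)).Connected ∧
  ∀ v : V, v ∉ F → k ≤ {u : V | u ∉ F ∧ G.Adj v u}.ncard

/-- The `R_k`-vertex-connectivity `κ^k(G)`: the minimum cardinality of an
`R_k`-vertex-cut of `G`. -/
noncomputable def rkConn {V : Type*} (G : SimpleGraph V) (k : ℕ) : ℕ :=
  sInf {m : ℕ | ∃ F : Set V, IsRkCut G k F ∧ F.ncard = m}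

section Toolkit
variable {α : Type*} [DecidableEq α]

lemma swap_det {σ : Equiv.Perm α} (hσ : σ.IsSwap) {p q : α}
    (h : σ p = q) (hpq : p ≠ q) : σ = Equiv.swap p q := by
  obtain ⟨e, f, hef, rfl⟩ := hσ
  by_cases hpe : p = e
  · subst hpe
    rw [Equiv.swap_apply_left] at h; subst h; rfl
  by_cases hpf : p = f
  · subst hpf; rw [Equiv.swap_apply_right] at h; subst h; rw [Equiv.swap_comm]
  · rw [Equiv.swap_apply_of_ne_of_ne hpe hpf] at h; exact absurd h hpq

lemma not_three {σ : Equiv.Perm α} (hσ : σ.IsSwap) {p q r : α}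
    (hpq : p ≠ q) (hpr : p ≠ r) (hqr : q ≠ r)
    (hp : σ p ≠ p) (hq : σ q ≠ q) (hr : σ r ≠ r) : False := by
  obtain ⟨e, f, hef, rfl⟩ := hσ
  have hp' : p = e ∨ p = f := by
    by_contra h; push_neg at h; exact hp (Equiv.swap_apply_of_ne_of_ne h.1 h.2)
  have hq' : q = e ∨ q = f := by
    by_contra h; push_neg at h; exact hq (Equiv.swap_apply_of_ne_of_ne h.1 h.2)
  have hr' : r = e ∨ r = f := by
    by_contra h; push_neg at h; exact hr (Equiv.swap_apply_of_ne_of_ne h.1 h.2)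
  rcases hp' with rfl | rfl <;> rcases hq' with rfl | rfl <;> rcases hr' with rfl | rfl <;>
    simp_all

lemma moved {z : Equiv.Perm α} {s₀ : α} (hz : z s₀ ≠ s₀)
    {x y : α} (hxy : x ≠ y) (hs : (z * Equiv.swap x y).IsSwap) : z x ≠ x := by
  intro hx
  have h1 : (z * Equiv.swap x y) y = x := by
    simp [Equiv.Perm.mul_apply, Equiv.swap_apply_right, hx]
  have h2 := swap_det hs h1 hxy.symm
  rw [Equiv.swap_comm y x] at h2
  have hz1 : z = 1 := by
    have := mul_right_cancel (b := Equiv.swap x y) (a := z) (c := 1)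
      (by rw [one_mul, h2])
    exact this
  rw [hz1] at hz; simp at hz

lemma badA {z : Equiv.Perm α} {a b c d : α}
    (hab : a ≠ b) (hcd : c ≠ d) (had : a ≠ d) (hbc : b ≠ c) (hbd : b ≠ d)
    (hzb : z b = a) (hzc : z c = d) (hzd : z d = c) :
    ¬ (z * Equiv.swap a c).IsSwap := by
  intro hσ
  refine not_three hσ hab had hbd ?_ ?_ ?_
  · show z (Equiv.swap a c a) ≠ a
    rw [Equiv.swap_apply_left, hzc]; exact fun h => had h.symm
  · show z (Equiv.swap a c b) ≠ b
    rw [Equiv.swap_apply_of_ne_of_ne (fun h => hab h.symm) hbc, hzb]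
    exact hab
  · show z (Equiv.swap a c d) ≠ d
    rw [Equiv.swap_apply_of_ne_of_ne (fun h => had h.symm) (fun h => hcd h.symm), hzd]
    exact hcd

lemma lemA {z : Equiv.Perm α} {a b c d : α}
    (hab : a ≠ b) (hcd : c ≠ d) (hac : a ≠ c) (had : a ≠ d) (hbc : b ≠ c) (hbd : b ≠ d)
    (hza : z a = b) (hzb : z b = a) (hzc : z c = d) (hzd : z d = c)
    (hfix : ∀ w, w ≠ a → w ≠ b → w ≠ c → w ≠ d → z w = w)
    {τ : Equiv.Perm α} (hτ : τ.IsSwap) (hστ : (z * τ).IsSwap) :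
    τ = Equiv.swap a b ∨ τ = Equiv.swap c d := by
  obtain ⟨x, y, hxy, rfl⟩ := hτ
  have hza' : z a ≠ a := by rw [hza]; exact fun h => hab h.symm
  have hx : z x ≠ x := moved hza' hxy hστ
  have hy : z y ≠ y := by
    refine moved hza' hxy.symm ?_
    rwa [Equiv.swap_comm y x]
  have hx4 : x = a ∨ x = b ∨ x = c ∨ x = d := by
    by_contra h; push_neg at h; exact hx (hfix x h.1 h.2.1 h.2.2.1 h.2.2.2)
  have hy4 : y = a ∨ y = b ∨ y = c ∨ y = d := by
    by_contra h; push_neg at h; exact hy (hfix y h.1 h.2.1 h.2.2.1 h.2.2.2)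
  rcases hx4 with rfl | rfl | rfl | rfl <;> rcases hy4 with rfl | rfl | rfl | rfl
  · exact absurd rfl hxy
  · exact Or.inl rfl
  · exact absurd hστ (badA hab hcd had hbc hbd hzb hzc hzd)
  · exact absurd hστ (badA hab hcd.symm hac hbd hbc hzb hzd hzc)
  · exact Or.inl (Equiv.swap_comm x y)
  · exact absurd rfl hxy
  · exact absurd hστ (badA hab.symm hcd hbd hac had hza hzc hzd)
  · exact absurd hστ (badA hab.symm hcd.symm hbc had hac hza hzd hzc)
  · exact absurd hστ (badA hcd hab (Ne.symm hbc) (Ne.symm had) (Ne.symm hbd) hzd hza hzb)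
  · exact absurd hστ (badA hcd hab.symm (Ne.symm hac) (Ne.symm hbd) (Ne.symm had) hzd hzb hza)
  · exact absurd rfl hxy
  · exact Or.inr rfl
  · exact absurd hστ (badA hcd.symm hab (Ne.symm hbd) (Ne.symm hac) (Ne.symm hbc) hzc hza hzb)
  · exact absurd hστ (badA hcd.symm hab.symm (Ne.symm had) (Ne.symm hbc) (Ne.symm hac) hzc hzb hza)
  · exact Or.inr (Equiv.swap_comm x y)
  · exact absurd rfl hxy

lemma lemB {z : Equiv.Perm α} {s p t : α}
    (hsp : s ≠ p) (hpt : p ≠ t) (hst : s ≠ t)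
    (hzs : z s = t) (_hzt : z t = p) (_hzp : z p = s)
    (hfix : ∀ w, w ≠ s → w ≠ p → w ≠ t → z w = w)
    {τ : Equiv.Perm α} (hτ : τ.IsSwap) (hστ : (z * τ).IsSwap) :
    τ = Equiv.swap s t ∨ τ = Equiv.swap s p ∨ τ = Equiv.swap p t := by
  obtain ⟨x, y, hxy, rfl⟩ := hτ
  have hzs' : z s ≠ s := by rw [hzs]; exact fun h => hst h.symm
  have hx : z x ≠ x := moved hzs' hxy hστ
  have hy : z y ≠ y := by
    refine moved hzs' hxy.symm ?_
    rwa [Equiv.swap_comm y x]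
  have hx3 : x = s ∨ x = p ∨ x = t := by
    by_contra h; push_neg at h; exact hx (hfix x h.1 h.2.1 h.2.2)
  have hy3 : y = s ∨ y = p ∨ y = t := by
    by_contra h; push_neg at h; exact hy (hfix y h.1 h.2.1 h.2.2)
  rcases hx3 with rfl | rfl | rfl <;> rcases hy3 with rfl | rfl | rfl
  · exact absurd rfl hxy
  · exact Or.inr (Or.inl rfl)
  · exact Or.inl rfl
  · exact Or.inr (Or.inl (Equiv.swap_comm x y))
  · exact absurd rfl hxy
  · exact Or.inr (Or.inr rfl)
  · exact Or.inl (Equiv.swap_comm x y)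
  · exact Or.inr (Or.inr (Equiv.swap_comm x y))
  · exact absurd rfl hxy

lemma lemB_eqs {z : Equiv.Perm α} {s p t : α}
    (hsp : s ≠ p) (hpt : p ≠ t) (hst : s ≠ t)
    (hzs : z s = t) (hzt : z t = p) (hzp : z p = s)
    (hfix : ∀ w, w ≠ s → w ≠ p → w ≠ t → z w = w) :
    z * Equiv.swap s t = Equiv.swap s p ∧
    z * Equiv.swap s p = Equiv.swap p t ∧
    z * Equiv.swap p t = Equiv.swap s t := by
  refine ⟨?_, ?_, ?_⟩
  · ext w
    simp only [Equiv.Perm.mul_apply]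
    by_cases h1 : w = s
    · subst h1; rw [Equiv.swap_apply_left, hzt, Equiv.swap_apply_left]
    by_cases h2 : w = t
    · subst h2
      rw [Equiv.swap_apply_right, hzs, Equiv.swap_apply_of_ne_of_ne hst.symm hpt.symm]
    by_cases h3 : w = p
    · subst h3
      rw [Equiv.swap_apply_of_ne_of_ne hsp.symm hpt, hzp, Equiv.swap_apply_right]
    · rw [Equiv.swap_apply_of_ne_of_ne h1 h2, hfix w h1 h3 h2,
        Equiv.swap_apply_of_ne_of_ne h1 h3]
  · ext w
    simp only [Equiv.Perm.mul_apply]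
    by_cases h1 : w = s
    · subst h1; rw [Equiv.swap_apply_left, hzp, Equiv.swap_apply_of_ne_of_ne hsp hst]
    by_cases h2 : w = p
    · subst h2; rw [Equiv.swap_apply_right, hzs, Equiv.swap_apply_left]
    by_cases h3 : w = t
    · subst h3
      rw [Equiv.swap_apply_of_ne_of_ne hst.symm hpt.symm, hzt, Equiv.swap_apply_right]
    · rw [Equiv.swap_apply_of_ne_of_ne h1 h2, hfix w h1 h2 h3,
        Equiv.swap_apply_of_ne_of_ne h2 h3]
  · ext w
    simp only [Equiv.Perm.mul_apply]
    by_cases h1 : w = p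
    · subst h1; rw [Equiv.swap_apply_left, hzt, Equiv.swap_apply_of_ne_of_ne hsp.symm hpt]
    by_cases h2 : w = t
    · subst h2; rw [Equiv.swap_apply_right, hzp, Equiv.swap_apply_right]
    by_cases h3 : w = s
    · subst h3; rw [Equiv.swap_apply_of_ne_of_ne hsp hst, hzs, Equiv.swap_apply_left]
    · rw [Equiv.swap_apply_of_ne_of_ne h1 h2, hfix w h3 h1 h2,
        Equiv.swap_apply_of_ne_of_ne h3 h2]


lemma ncard3 {β : Type*} (a b c : β) : ({a, b, c} : Set β).ncard ≤ 3 := by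
  refine (Set.ncard_insert_le _ _).trans ?_
  have h := Set.ncard_insert_le b ({c} : Set β)
  simp only [Set.ncard_singleton] at h
  omega


lemma cayley_adj {n : ℕ} {T : Set (Equiv.Perm (Fin n))} (hT : ∀ t ∈ T, Equiv.Perm.IsSwap t)
    (g w : Equiv.Perm (Fin n)) : (cayley T).Adj g w ↔ ∃ t ∈ T, w = g * t := by
  unfold cayley
  rw [SimpleGraph.fromRel_adj]
  constructor
  · rintro ⟨hne, ⟨t, htT, h⟩ | ⟨t, htT, h⟩⟩
    · exact ⟨t, htT, h⟩
    · refine ⟨t, htT, ?_⟩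
      obtain ⟨x, y, hxy, rfl⟩ := hT t htT
      rw [h, mul_assoc, Equiv.swap_mul_self, mul_one]
  · rintro ⟨t, htT, rfl⟩
    obtain ⟨x, y, hxy, hx⟩ := hT t htT
    refine ⟨?_, Or.inl ⟨t, htT, rfl⟩⟩
    intro h
    have h1 : (1 : Equiv.Perm (Fin n)) = t := mul_left_cancel (a := g) (by rw [mul_one, ← h])
    rw [hx] at h1
    exact hxy (Equiv.swap_eq_one_iff.mp h1.symm)

lemma caseB {n : ℕ} {T : Set (Equiv.Perm (Fin n))} (hT : ∀ t ∈ T, Equiv.Perm.IsSwap t)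
    {u v z : Equiv.Perm (Fin n)} (hvz : v * z = u)
    {S : Set (Equiv.Perm (Fin n))} (hSdef : S = {t | t ∈ T ∧ z * t ∈ T})
    (hN : (cayley T).neighborSet u ∩ (cayley T).neighborSet v = (fun x => u * x) '' S)
    {t₁ t₂ t₃ : Equiv.Perm (Fin n)} (h12 : t₁ ≠ t₂) (h13 : t₁ ≠ t₃) (h23 : t₂ ≠ t₃)
    (hS : S = {t₁, t₂, t₃})
    {s p t : Fin n} (hsp : s ≠ p) (hpt : p ≠ t) (hst : s ≠ t)
    (hzs : z s = t) (hzt : z t = p) (hzp : z p = s)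
    (hfix : ∀ w, w ≠ s → w ≠ p → w ≠ t → z w = w) :
    ∃ s p t : Fin n, s ≠ p ∧ p ≠ t ∧ s ≠ t ∧
      Equiv.swap s t ∈ T ∧ Equiv.swap s p ∈ T ∧ Equiv.swap p t ∈ T ∧
      u * Equiv.swap s t = v * Equiv.swap s p ∧
      u * Equiv.swap s p = v * Equiv.swap p t ∧
      u * Equiv.swap p t = v * Equiv.swap s t ∧
      (cayley T).neighborSet u ∩ (cayley T).neighborSet v =
        {u * Equiv.swap s t, u * Equiv.swap s p, u * Equiv.swap p t} := by
  obtain ⟨e1, e2, e3⟩ := lemB_eqs hsp hpt hst hzs hzt hzp hfix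
  have hsub : S ⊆ ({Equiv.swap s t, Equiv.swap s p, Equiv.swap p t} : Set _) := by
    intro x hx
    rw [hSdef] at hx
    rcases lemB hsp hpt hst hzs hzt hzp hfix (hT x hx.1) (hT _ hx.2) with h | h | h <;>
      simp [h]
  have hScard : S.ncard = 3 := by
    rw [hS]
    exact Set.ncard_eq_three.mpr ⟨_, _, _, h12, h13, h23, rfl⟩
  have hE : S = ({Equiv.swap s t, Equiv.swap s p, Equiv.swap p t} : Set _) := by
    refine Set.eq_of_subset_of_ncard_le hsub ?_ (Set.toFinite _)
    rw [hScard]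
    exact ncard3 _ _ _
  have hstS : Equiv.swap s t ∈ S := by rw [hE]; simp
  have hspS : Equiv.swap s p ∈ S := by rw [hE]; simp
  have hptS : Equiv.swap p t ∈ S := by rw [hE]; simp
  rw [hSdef] at hstS hspS hptS
  refine ⟨s, p, t, hsp, hpt, hst, hstS.1, hspS.1, hptS.1, ?_, ?_, ?_, ?_⟩
  · rw [← hvz, mul_assoc, e1]
  · rw [← hvz, mul_assoc, e2]
  · rw [← hvz, mul_assoc, e3]
  · rw [hN, hE]
    simp [Set.image_insert_eq]

end Toolkit

/-- If two distinct vertices `u, v` of `Cay(Sym(n), 𝒯)` have exactly `3` common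
neighbors, then there is a triangle `s p t` in `G(𝒯)` such that the three common
neighbors are `u(st) = v(sp)`, `u(sp) = v(pt)` and `u(pt) = v(st)`. -/
theorem stmt7 (n : ℕ) (T : Set (Equiv.Perm (Fin n))) (hT : ∀ t ∈ T, Equiv.Perm.IsSwap t)
    (u v : Equiv.Perm (Fin n)) (huv : u ≠ v)
    (h3 : ((cayley T).neighborSet u ∩ (cayley T).neighborSet v).ncard = 3) :
    ∃ s p t : Fin n, s ≠ p ∧ p ≠ t ∧ s ≠ t ∧
      Equiv.swap s t ∈ T ∧ Equiv.swap s p ∈ T ∧ Equiv.swap p t ∈ T ∧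
      u * Equiv.swap s t = v * Equiv.swap s p ∧
      u * Equiv.swap s p = v * Equiv.swap p t ∧
      u * Equiv.swap p t = v * Equiv.swap s t ∧
      (cayley T).neighborSet u ∩ (cayley T).neighborSet v =
        {u * Equiv.swap s t, u * Equiv.swap s p, u * Equiv.swap p t} := by
  classical
  set z := v⁻¹ * u with hzdef
  have hvz : v * z = u := by rw [hzdef, mul_inv_cancel_left]
  set S : Set (Equiv.Perm (Fin n)) := {t | t ∈ T ∧ z * t ∈ T} with hSdef
  have hN : (cayley T).neighborSet u ∩ (cayley T).neighborSet v = (fun x => u * x) '' S := by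
    ext w
    simp only [Set.mem_inter_iff, SimpleGraph.mem_neighborSet, cayley_adj hT,
      Set.mem_image, hSdef, Set.mem_setOf_eq]
    constructor
    · rintro ⟨⟨t, htT, rfl⟩, ⟨t', ht'T, h'⟩⟩
      refine ⟨t, ⟨htT, ?_⟩, rfl⟩
      have hzt : z * t = t' := by rw [hzdef, mul_assoc, h', inv_mul_cancel_left]
      rw [hzt]; exact ht'T
    · rintro ⟨t, ⟨htT, hzt⟩, rfl⟩
      exact ⟨⟨t, htT, rfl⟩, ⟨z * t, hzt, by rw [← mul_assoc, hvz]⟩⟩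
  have hS3 : S.ncard = 3 := by
    rw [hN, Set.ncard_image_of_injective S (mul_right_injective u)] at h3
    exact h3
  obtain ⟨t₁, t₂, t₃, h12, h13, h23, hS⟩ := Set.ncard_eq_three.mp hS3
  have hz1ne : z ≠ 1 := by
    rw [hzdef]
    intro h
    exact huv (inv_mul_eq_one.mp h).symm
  have ht1 : t₁ ∈ T ∧ z * t₁ ∈ T := by
    have : t₁ ∈ S := by rw [hS]; exact Set.mem_insert _ _
    rwa [hSdef] at this
  have ht2 : t₂ ∈ T ∧ z * t₂ ∈ T := by
    have : t₂ ∈ S := by rw [hS]; simp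
    rwa [hSdef] at this
  have ht3 : t₃ ∈ T ∧ z * t₃ ∈ T := by
    have : t₃ ∈ S := by rw [hS]; simp
    rwa [hSdef] at this
  obtain ⟨a, b, hab, hab'⟩ := hT t₁ ht1.1
  obtain ⟨c, d, hcd, hcd'⟩ := hT _ ht1.2
  have hz1 : z * Equiv.swap a b = Equiv.swap c d := by rw [← hab']; exact hcd'
  have hzw : ∀ w, z w = Equiv.swap c d (Equiv.swap a b w) := by
    intro w
    have hz2 : z = Equiv.swap c d * Equiv.swap a b := by
      rw [← hz1, mul_assoc, Equiv.swap_mul_self, mul_one]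
    rw [hz2]; rfl
  by_cases hac : a = c
  · subst hac
    by_cases hbd : b = d
    · subst hbd
      exact absurd (mul_right_cancel (b := Equiv.swap a b) (a := z) (c := 1)
        (by rw [one_mul]; exact hz1)) hz1ne
    · -- config: z is 3-cycle a → b → d → a ; s=a, p=d, t=b
      have hza : z a = b := by
        rw [hzw, Equiv.swap_apply_left, Equiv.swap_apply_of_ne_of_ne hab.symm hbd]
      have hzb : z b = d := by
        rw [hzw, Equiv.swap_apply_right, Equiv.swap_apply_left]
      have hzd : z d = a := by
        rw [hzw, Equiv.swap_apply_of_ne_of_ne (Ne.symm hcd) (Ne.symm hbd),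
          Equiv.swap_apply_right]
      have hfix : ∀ w, w ≠ a → w ≠ d → w ≠ b → z w = w := by
        intro w h1 h2 h3
        rw [hzw, Equiv.swap_apply_of_ne_of_ne h1 h3, Equiv.swap_apply_of_ne_of_ne h1 h2]
      exact caseB hT hvz hSdef hN h12 h13 h23 hS hcd (fun h => hbd h.symm) hab
        hza hzb hzd hfix
  · by_cases had : a = d
    · subst had
      by_cases hbc : b = c
      · subst hbc
        refine absurd (mul_right_cancel (b := Equiv.swap a b) (a := z) (c := 1) ?_) hz1ne
        rw [one_mul, hz1, Equiv.swap_comm]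
      · -- z = swap c a * swap a b ; 3-cycle a → b → c → a ; s=a, p=c, t=b
        have hza : z a = b := by
          rw [hzw, Equiv.swap_apply_left, Equiv.swap_apply_of_ne_of_ne
            (fun h => hbc h) hab.symm]
        have hzb : z b = c := by
          rw [hzw, Equiv.swap_apply_right, Equiv.swap_apply_right]
        have hzc : z c = a := by
          rw [hzw, Equiv.swap_apply_of_ne_of_ne (fun h => hac h.symm)
            (fun h => hbc h.symm), Equiv.swap_apply_left]
        have hfix : ∀ w, w ≠ a → w ≠ c → w ≠ b → z w = w := by
          intro w h1 h2 h3
          rw [hzw, Equiv.swap_apply_of_ne_of_ne h1 h3, Equiv.swap_apply_of_ne_of_ne h2 h1]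
        exact caseB hT hvz hSdef hN h12 h13 h23 hS hac (fun h => hbc h.symm) hab
          hza hzb hzc hfix
    · by_cases hbc : b = c
      · subst hbc
        -- z = swap b d * swap a b ; 3-cycle a → d → b → a ; s=a, p=b, t=d
        have hza : z a = d := by
          rw [hzw, Equiv.swap_apply_left, Equiv.swap_apply_left]
        have hzd : z d = b := by
          rw [hzw, Equiv.swap_apply_of_ne_of_ne (fun h => had h.symm)
            (fun h => hcd h.symm), Equiv.swap_apply_right]
        have hzb : z b = a := by
          rw [hzw, Equiv.swap_apply_right, Equiv.swap_apply_of_ne_of_ne hab had]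
        have hfix : ∀ w, w ≠ a → w ≠ b → w ≠ d → z w = w := by
          intro w h1 h2 h3
          rw [hzw, Equiv.swap_apply_of_ne_of_ne h1 h2, Equiv.swap_apply_of_ne_of_ne h2 h3]
        exact caseB hT hvz hSdef hN h12 h13 h23 hS hab (fun h => hcd h) had
          hza hzd hzb hfix
      · by_cases hbd : b = d
        · subst hbd
          -- z = swap c b * swap a b ; 3-cycle a → c → b → a ; s=a, p=b, t=c
          have hza : z a = c := by
            rw [hzw, Equiv.swap_apply_left, Equiv.swap_apply_right]
          have hzc : z c = b := by
            rw [hzw, Equiv.swap_apply_of_ne_of_ne (fun h => hac h.symm)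
              (fun h => hcd h), Equiv.swap_apply_left]
          have hzb : z b = a := by
            rw [hzw, Equiv.swap_apply_right, Equiv.swap_apply_of_ne_of_ne hac hab]
          have hfix : ∀ w, w ≠ a → w ≠ b → w ≠ c → z w = w := by
            intro w h1 h2 h3
            rw [hzw, Equiv.swap_apply_of_ne_of_ne h1 h2, Equiv.swap_apply_of_ne_of_ne h3 h2]
          exact caseB hT hvz hSdef hN h12 h13 h23 hS hab (fun h => hcd h.symm) hac
            hza hzc hzb hfix
        · -- case A : a, b, c, d all distinct
          have hza : z a = b := by
            rw [hzw, Equiv.swap_apply_left, Equiv.swap_apply_of_ne_of_ne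
              (fun h => hbc h) (fun h => hbd h)]
          have hzb : z b = a := by
            rw [hzw, Equiv.swap_apply_right, Equiv.swap_apply_of_ne_of_ne hac had]
          have hzc : z c = d := by
            rw [hzw, Equiv.swap_apply_of_ne_of_ne (fun h => hac h.symm)
              (fun h => hbc h.symm), Equiv.swap_apply_left]
          have hzd : z d = c := by
            rw [hzw, Equiv.swap_apply_of_ne_of_ne (fun h => had h.symm)
              (fun h => hbd h.symm), Equiv.swap_apply_right]
          have hfix : ∀ w, w ≠ a → w ≠ b → w ≠ c → w ≠ d → z w = w := by
            intro w h1 h2 h3 h4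
            rw [hzw, Equiv.swap_apply_of_ne_of_ne h1 h2, Equiv.swap_apply_of_ne_of_ne h3 h4]
          have k2 := lemA hab hcd hac had hbc hbd hza hzb hzc hzd hfix
            (hT t₂ ht2.1) (hT _ ht2.2)
          have k3 := lemA hab hcd hac had hbc hbd hza hzb hzc hzd hfix
            (hT t₃ ht3.1) (hT _ ht3.2)
          have k1 : t₁ = Equiv.swap a b := hab'
          rcases k2 with k2 | k2 <;> rcases k3 with k3 | k3
          · exact absurd (k1.trans k2.symm) h12
          · exact absurd (k1.trans k2.symm) h12
          · exact absurd (k1.trans k3.symm) h13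
          · exact absurd (k2.trans k3.symm) h23
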